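/- Let E be a finite-dimensional real inner product space, D ⊆ E a linear subspace, W := ♭(D) ⊆ E*, γ : E* → E* the orthogonal projection onto W with respect to ⟪·,·⟫_*, Γ(q,p) := (q, γ(p)), pr_D : E → D the orthogonal projection, and ω the canonical symplectic form on E × E*. For F, G : E × E* → ℝ differentiable, set {F,G}_can(x) := ω(X_F(x), X_G(x)), where X_F(x) is the unique element with ω(X_F(x),·) = DF(x). Define φ : E × W → E × D* by φ(q,w) := (q, w|_D) (restriction of the functional w to D), which is a linear bijection. For smooth f, g : E × D* → ℝ define {f,g}_{D*}(q,η) := {f∘ρ, g∘ρ}_can(q, η∘pr_D), where ρ : E × E* → E × D*, ρ(q,p) := (q, p|_D). Then for all smooth f, g : E × D* → ℝ and all m ∈ E × W: {f∘φ, g∘φ}_E(m) = {f,g}_{D*}(φ(m)), where {h,k}_E(m) := {h∘Γ, k∘Γ}_can(m) for smooth h, k : E × W → ℝ. That is, φ is an almost Poisson isomorphism from (E × W, {·,·}_E) to (E × D*, {·,·}_{D*}). -/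

import Mathlib

open InnerProductSpace

/-- The canonical symplectic form on `E × E*`: `ω((v,α),(w,β)) = β(v) − α(w)`. -/
def canOmega (E : Type*) [NormedAddCommGroup E] [NormedSpace ℝ E] :
    (E × (E →L[ℝ] ℝ)) → (E × (E →L[ℝ] ℝ)) → ℝ :=
  fun x y => y.2 x.1 - x.2 y.1

/-- The inner product `⟪·,·⟫_*` induced on the dual `E*` by the musical isomorphism:
`⟪α,β⟫_* = ⟪♯α, ♯β⟫`. -/
noncomputable def dualInner {E : Type*} [NormedAddCommGroup E] [InnerProductSpace ℝ E]
    [FiniteDimensional ℝ E] (α β : E →L[ℝ] ℝ) : ℝ :=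
  inner ℝ ((InnerProductSpace.toDual ℝ E).symm α) ((InnerProductSpace.toDual ℝ E).symm β)

/-- The restriction map `ρ : E × E* → E × D*`, `ρ(q,p) = (q, p|_D)`. -/
noncomputable def rhoMap (E : Type*) [NormedAddCommGroup E] [InnerProductSpace ℝ E]
    (D : Submodule ℝ E) : E × (E →L[ℝ] ℝ) → E × (↥D →L[ℝ] ℝ) :=
  fun x => (x.1, x.2.comp D.subtypeL)

/-- The map `φ : E × W → E × D*`, `φ(q,w) = (q, w|_D)`. -/
noncomputable def phiMap (E : Type*) [NormedAddCommGroup E] [InnerProductSpace ℝ E]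
    (D : Submodule ℝ E) (W : Submodule ℝ (E →L[ℝ] ℝ)) : E × ↥W → E × (↥D →L[ℝ] ℝ) :=
  fun m => (m.1, (m.2 : E →L[ℝ] ℝ).comp D.subtypeL)

section Aux

variable {E : Type*} [NormedAddCommGroup E] [InnerProductSpace ℝ E] [FiniteDimensional ℝ E]
  (D : Submodule ℝ E) (W : Submodule ℝ (E →L[ℝ] ℝ))

lemma aux_mem_W (hW : W = Submodule.map (InnerProductSpace.toDual ℝ E).toLinearEquiv.toLinearMap D)
    {d : E} (hd : d ∈ D) : (InnerProductSpace.toDual ℝ E d : E →L[ℝ] ℝ) ∈ W := by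
  rw [hW]; exact ⟨d, hd, rfl⟩

lemma aux_gamma_restrict
    (hW : W = Submodule.map (InnerProductSpace.toDual ℝ E).toLinearEquiv.toLinearMap D)
    (γ : (E →L[ℝ] ℝ) → (E →L[ℝ] ℝ))
    (hγorth : ∀ α, ∀ w ∈ W, dualInner (α - γ α) w = 0)
    (α : E →L[ℝ] ℝ) {d : E} (hd : d ∈ D) : γ α d = α d := by
  have h := hγorth α _ (aux_mem_W D W hW hd)
  unfold dualInner at h
  rw [LinearIsometryEquiv.symm_apply_apply] at h
  rw [InnerProductSpace.toDual_symm_apply] at h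
  have h3 : α d - γ α d = 0 := by simpa using h
  linarith

lemma aux_proj_comp
    {w : E →L[ℝ] ℝ} {d : E} (hd : d ∈ D)
    (hdw : (InnerProductSpace.toDual ℝ E d : E →L[ℝ] ℝ) = w) :
    (w.comp D.subtypeL).comp (D.orthogonalProjection) = w := by
  ext v
  have h0 : inner ℝ (v - (D.orthogonalProjection v : E)) d = 0 :=
    D.starProjection_inner_eq_zero v d hd
  have h1 : inner (𝕜 := ℝ) d ((D.orthogonalProjection v : E)) = inner (𝕜 := ℝ) d v := by
    have := real_inner_comm (v - (D.orthogonalProjection v : E)) d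
    rw [h0] at this
    have h2 : inner (𝕜 := ℝ) d (v - (D.orthogonalProjection v : E)) = 0 := this
    rw [inner_sub_right] at h2
    linarith
  simp only [ContinuousLinearMap.coe_comp', Function.comp_apply,
    Submodule.coe_subtypeL', Submodule.coe_subtype]
  rw [← hdw]
  simpa [InnerProductSpace.toDual_apply_apply] using h1

end Aux

/-- The map `φ : E × W → E × D*`, `φ(q,w) := (q, w|_D)`, is a linear bijection
and an almost Poisson isomorphism from `(E × W, {·,·}_E)` (Eden bracket) to
`(E × D*, {·,·}_{D*})` (almost Lie algebroid bracket): for all smooth `f, g : E × D* → ℝ` and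
all `m ∈ E × W`, `{f∘φ, g∘φ}_E(m) = {f,g}_{D*}(φ(m))`. -/
theorem phi_is_almost_poisson_isomorphism_eden_to_algebroid
    (E : Type*) [NormedAddCommGroup E] [InnerProductSpace ℝ E] [FiniteDimensional ℝ E]
    (D : Submodule ℝ E)
    (W : Submodule ℝ (E →L[ℝ] ℝ))
    (hW : W = Submodule.map (InnerProductSpace.toDual ℝ E).toLinearEquiv.toLinearMap D)
    -- `γ` is the orthogonal projection of `E*` onto `W` w.r.t. the dual inner product:
    (γ : (E →L[ℝ] ℝ) → (E →L[ℝ] ℝ))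
    (hγW : ∀ α, γ α ∈ W)
    (hγorth : ∀ α, ∀ w ∈ W, dualInner (α - γ α) w = 0)
    -- `X_F(x)` is the (unique) Hamiltonian vector of `F` at `x`:
    (XF : (E × (E →L[ℝ] ℝ) → ℝ) → E × (E →L[ℝ] ℝ) → E × (E →L[ℝ] ℝ))
    (hXF : ∀ (F : E × (E →L[ℝ] ℝ) → ℝ) (x : E × (E →L[ℝ] ℝ)), DifferentiableAt ℝ F x →
      ∀ u, canOmega E (XF F x) u = fderiv ℝ F x u) :
    (IsLinearMap ℝ (phiMap E D W) ∧ Function.Bijective (phiMap E D W)) ∧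
    (∀ f g : E × (↥D →L[ℝ] ℝ) → ℝ, ContDiff ℝ (⊤ : ℕ∞) f → ContDiff ℝ (⊤ : ℕ∞) g →
      ∀ m : E × ↥W,
        -- the Eden bracket `{f∘φ, g∘φ}_E` at `m` ...
        canOmega E
          (XF (fun x => f (phiMap E D W (x.1, ⟨γ x.2, hγW x.2⟩))) (m.1, ↑m.2))
          (XF (fun x => g (phiMap E D W (x.1, ⟨γ x.2, hγW x.2⟩))) (m.1, ↑m.2)) =
        -- ... equals the algebroid bracket `{f,g}_{D*}` at `φ(m)`:
        canOmega E
          (XF (fun x => f (rhoMap E D x))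
            ((phiMap E D W m).1, ((phiMap E D W m).2).comp (D.orthogonalProjection)))
          (XF (fun x => g (rhoMap E D x))
            ((phiMap E D W m).1, ((phiMap E D W m).2).comp (D.orthogonalProjection)))) := by

  constructor
  · constructor
    · constructor
      · intro a b
        simp [phiMap, ContinuousLinearMap.add_comp, Prod.ext_iff]
      · intro c a
        simp [phiMap, ContinuousLinearMap.smul_comp, Prod.ext_iff]
    · constructor
      · rintro ⟨q1, w1⟩ ⟨q2, w2⟩ h
        have h1 : q1 = q2 := congrArg Prod.fst h
        have h2 : (w1 : E →L[ℝ] ℝ).comp D.subtypeL = (w2 : E →L[ℝ] ℝ).comp D.subtypeL :=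
          congrArg Prod.snd h
        have hw : (w1 : E →L[ℝ] ℝ) = (w2 : E →L[ℝ] ℝ) := by
          have hmem : ((w1 : E →L[ℝ] ℝ) - (w2 : E →L[ℝ] ℝ))
              ∈ Submodule.map (InnerProductSpace.toDual ℝ E).toLinearEquiv.toLinearMap D := by
            rw [← hW]; exact W.sub_mem w1.2 w2.2
          obtain ⟨d, hd, hdw⟩ := hmem
          have hzero : ((w1 : E →L[ℝ] ℝ) - (w2 : E →L[ℝ] ℝ)) d = 0 := by
            have := congrArg (fun (φ : ↥D →L[ℝ] ℝ) => φ ⟨d, hd⟩) h2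
            simp only [ContinuousLinearMap.coe_comp', Function.comp_apply,
              Submodule.coe_subtypeL', Submodule.coe_subtype] at this
            simp [ContinuousLinearMap.sub_apply, this]
          have hdd : inner (𝕜 := ℝ) d d = 0 := by
            have : (InnerProductSpace.toDual ℝ E d : E →L[ℝ] ℝ) d = 0 := by
              rw [show (InnerProductSpace.toDual ℝ E d : E →L[ℝ] ℝ)
                  = (w1 : E →L[ℝ] ℝ) - (w2 : E →L[ℝ] ℝ) from hdw]
              exact hzero
            simpa [InnerProductSpace.toDual_apply_apply] using this
          have hd0 : d = 0 := by
            rwa [inner_self_eq_zero] at hdd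
          have : (w1 : E →L[ℝ] ℝ) - (w2 : E →L[ℝ] ℝ) = 0 := by
            rw [← hdw, hd0]; simp
          exact sub_eq_zero.mp this
        exact Prod.ext h1 (Subtype.ext hw)
      · rintro ⟨q, η⟩
        have : CompleteSpace ↥D := FiniteDimensional.complete ℝ ↥D
        set d₀ : ↥D := (InnerProductSpace.toDual ℝ ↥D).symm η with hd₀
        refine ⟨(q, ⟨InnerProductSpace.toDual ℝ E (d₀ : E), aux_mem_W D W hW d₀.2⟩), ?_⟩
        simp only [phiMap]
        refine Prod.ext rfl ?_
        ext v
        simp only [ContinuousLinearMap.coe_comp', Function.comp_apply,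
          Submodule.coe_subtypeL', Submodule.coe_subtype,
          InnerProductSpace.toDual_apply_apply]
        have : inner (𝕜 := ℝ) (d₀ : E) (v : E) = inner (𝕜 := ℝ) d₀ v := rfl
        rw [this, hd₀, InnerProductSpace.toDual_symm_apply]
  · intro f g hf hg m
    have hfun : ∀ (h : E × (↥D →L[ℝ] ℝ) → ℝ),
        (fun x : E × (E →L[ℝ] ℝ) => h (phiMap E D W (x.1, ⟨γ x.2, hγW x.2⟩)))
          = (fun x => h (rhoMap E D x)) := by
      intro h
      funext x
      simp only [phiMap, rhoMap]
      have : (γ x.2).comp D.subtypeL = x.2.comp D.subtypeL := by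
        ext d
        exact aux_gamma_restrict D W hW γ hγorth x.2 d.2
      rw [this]
    have hm : ((m.2 : E →L[ℝ] ℝ))
        ∈ Submodule.map (InnerProductSpace.toDual ℝ E).toLinearEquiv.toLinearMap D := by
      rw [← hW]; exact m.2.2
    obtain ⟨d, hd, hdw⟩ := hm
    have hpt : ((phiMap E D W m).1, ((phiMap E D W m).2).comp (D.orthogonalProjection))
        = (m.1, (m.2 : E →L[ℝ] ℝ)) := by
      refine Prod.ext rfl ?_
      exact aux_proj_comp D hd hdw
    rw [hfun f, hfun g, hpt]
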